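/- Let A, B, C be three pairwise disjoint finite point sets in R^d with |A| ≤ |B|. Then D(A∪B, C) ≤ 3·Δ(B∪C) + 3·D(A,B) − Δ(B) − Δ(C). -/

import Mathlib

open Finset
open scoped Classical

noncomputable def centroid {d : ℕ} (P : Finset (EuclideanSpace ℝ (Fin d))) :
    EuclideanSpace ℝ (Fin d) :=
  (P.card : ℝ)⁻¹ • ∑ p ∈ P, p

noncomputable def Delta {d : ℕ} (P : Finset (EuclideanSpace ℝ (Fin d))) : ℝ :=
  ∑ p ∈ P, ‖p - centroid P‖ ^ 2

noncomputable def mergeD {d : ℕ} (A B : Finset (EuclideanSpace ℝ (Fin d))) : ℝ :=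
  Delta (A ∪ B) - Delta A - Delta B

variable {d : ℕ}

noncomputable abbrev μ {d : ℕ} (P : Finset (EuclideanSpace ℝ (Fin d))) := _root_.centroid P

lemma card_smul_centroid (P : Finset (EuclideanSpace ℝ (Fin d))) :
    (P.card : ℝ) • μ P = ∑ p ∈ P, p := by
  rcases eq_or_ne P ∅ with h | h
  · simp [h, _root_.centroid]
  · have hc : (P.card : ℝ) ≠ 0 := by
      simpa using Finset.nonempty_of_ne_empty h |>.card_pos.ne'
    rw [show μ P = (P.card : ℝ)⁻¹ • ∑ p ∈ P, p from rfl, smul_smul, mul_inv_cancel₀ hc, one_smul]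

lemma sum_sub_centroid (P : Finset (EuclideanSpace ℝ (Fin d))) :
    ∑ p ∈ P, (p - μ P) = 0 := by
  rw [Finset.sum_sub_distrib, Finset.sum_const, ← card_smul_centroid P,
    ← Nat.cast_smul_eq_nsmul ℝ, sub_self]

lemma sum_norm_sub_sq (P : Finset (EuclideanSpace ℝ (Fin d)))
    (z : EuclideanSpace ℝ (Fin d)) :
    ∑ p ∈ P, ‖p - z‖ ^ 2 = Delta P + (P.card : ℝ) * ‖μ P - z‖ ^ 2 := by
  have key : ∀ p : EuclideanSpace ℝ (Fin d), ‖p - z‖^2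
      = ‖p - μ P‖^2 + 2 * (inner ℝ (p - μ P) (μ P - z) : ℝ)
        + ‖μ P - z‖^2 := by
    intro p
    rw [← norm_add_sq_real, sub_add_sub_cancel]
  calc ∑ p ∈ P, ‖p - z‖ ^ 2
      = ∑ p ∈ P, (‖p - μ P‖^2
          + 2 * (inner ℝ (p - μ P) (μ P - z) : ℝ)
          + ‖μ P - z‖^2) := Finset.sum_congr rfl fun p _ => key p
    _ = Delta P + 2 * (inner ℝ (∑ p ∈ P, (p - μ P)) (μ P - z) : ℝ)
          + (P.card : ℝ) * ‖μ P - z‖^2 := by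
        rw [Finset.sum_add_distrib, Finset.sum_add_distrib, Finset.sum_const,
          ← Finset.mul_sum, ← sum_inner, Delta, nsmul_eq_mul]
    _ = Delta P + (P.card : ℝ) * ‖μ P - z‖ ^ 2 := by
        rw [sum_sub_centroid]
        simp


lemma Delta_nonneg (P : Finset (EuclideanSpace ℝ (Fin d))) : 0 ≤ Delta P :=
  Finset.sum_nonneg fun _ _ => by positivity

lemma Delta_empty : Delta (∅ : Finset (EuclideanSpace ℝ (Fin d))) = 0 := by
  simp [Delta]

lemma centroid_union {X Y : Finset (EuclideanSpace ℝ (Fin d))} (h : Disjoint X Y) :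
    μ (X ∪ Y) = ((X.card + Y.card : ℝ))⁻¹ • ((X.card : ℝ) • μ X + (Y.card : ℝ) • μ Y) := by
  rw [show μ (X ∪ Y) = ((X ∪ Y).card : ℝ)⁻¹ • ∑ p ∈ X ∪ Y, p from rfl,
    Finset.sum_union h, Finset.card_union_of_disjoint h, card_smul_centroid,
    card_smul_centroid, Nat.cast_add]

lemma mergeD_eq {X Y : Finset (EuclideanSpace ℝ (Fin d))} (h : Disjoint X Y) :
    mergeD X Y = (X.card : ℝ) * Y.card / (X.card + Y.card) * ‖μ X - μ Y‖ ^ 2 := by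
  rcases eq_or_ne X ∅ with hX | hX
  · simp [hX, mergeD, Delta_empty]
  rcases eq_or_ne Y ∅ with hY | hY
  · simp [hY, mergeD, Delta_empty]
  have hx : (0 : ℝ) < X.card := by
    exact_mod_cast (Finset.nonempty_of_ne_empty hX).card_pos
  have hy : (0 : ℝ) < Y.card := by
    exact_mod_cast (Finset.nonempty_of_ne_empty hY).card_pos
  have hs : (X.card : ℝ) + Y.card ≠ 0 := by positivity
  set x : ℝ := (X.card : ℝ)
  set y : ℝ := (Y.card : ℝ)
  have hXm : μ X - μ (X ∪ Y) = (y / (x + y)) • (μ X - μ Y) := by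
    rw [centroid_union h]
    change μ X - (x + y)⁻¹ • (x • μ X + y • μ Y) = _
    match_scalars <;> field_simp <;> ring
  have hYm : μ Y - μ (X ∪ Y) = (x / (x + y)) • (μ Y - μ X) := by
    rw [centroid_union h]
    change μ Y - (x + y)⁻¹ • (x • μ X + y • μ Y) = _
    match_scalars <;> field_simp <;> ring
  have hD : Delta (X ∪ Y) = Delta X + x * ‖μ X - μ (X ∪ Y)‖^2
      + (Delta Y + y * ‖μ Y - μ (X ∪ Y)‖^2) := by
    rw [Delta, Finset.sum_union h, sum_norm_sub_sq, sum_norm_sub_sq]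
  have hnorm : ‖μ Y - μ X‖ = ‖μ X - μ Y‖ := norm_sub_rev _ _
  rw [mergeD, hD, hXm, hYm, norm_smul, norm_smul, hnorm]
  have h1 : ‖(y / (x + y))‖ = y / (x+y) := abs_of_nonneg (by positivity)
  have h2 : ‖(x / (x + y))‖ = x / (x+y) := abs_of_nonneg (by positivity)
  rw [h1, h2]
  field_simp
  ring

lemma mergeD_nonneg {X Y : Finset (EuclideanSpace ℝ (Fin d))} (h : Disjoint X Y) :
    0 ≤ mergeD X Y := by
  rw [mergeD_eq h]; positivity

set_option maxHeartbeats 1000000 in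
theorem mergeD_union_three_bound {d : ℕ} (A B C : Finset (EuclideanSpace ℝ (Fin d)))
    (hAB : Disjoint A B) (hAC : Disjoint A C) (hBC : Disjoint B C)
    (hcard : A.card ≤ B.card) :
    mergeD (A ∪ B) C ≤ 3 * Delta (B ∪ C) + 3 * mergeD A B - Delta B - Delta C := by
  rcases eq_or_ne (A ∪ B) ∅ with h0 | h0
  · have hA : A = ∅ := by simpa using (Finset.union_eq_empty.mp h0).1
    have hB : B = ∅ := by simpa using (Finset.union_eq_empty.mp h0).2
    subst hA; subst hB
    simp only [mergeD, Delta_empty, Finset.empty_union, Finset.union_empty]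
    linarith [Delta_nonneg C]
  have hABC : Disjoint (A ∪ B) C := Finset.disjoint_union_left.mpr ⟨hAC, hBC⟩
  set a : ℝ := (A.card : ℝ) with hadef
  set b : ℝ := (B.card : ℝ) with hbdef
  set c : ℝ := (C.card : ℝ) with hcdef
  have ha : 0 ≤ a := Nat.cast_nonneg _
  have hc : 0 ≤ c := Nat.cast_nonneg _
  have hab : a ≤ b := by rw [hadef, hbdef]; exact_mod_cast hcard
  have hBne : B ≠ ∅ := by
    intro hB
    apply h0
    have hA0 : A.card = 0 := by rw [hB] at hcard; simpa using hcard
    rw [Finset.card_eq_zero.mp hA0, hB, Finset.union_empty]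
  have hb : 0 < b := by
    rw [hbdef]
    exact_mod_cast (Finset.nonempty_of_ne_empty hBne).card_pos
  have habpos : 0 < a + b := by linarith
  have habcpos : 0 < a + b + c := by linarith
  have hbcpos : 0 < b + c := by linarith
  set u := μ B - μ C with hudef
  set v := μ A - μ B with hvdef
  set w := (a / (a + b)) • v with hwdef
  have hu : μ (A ∪ B) - μ C = u + w := by
    rw [centroid_union hAB, hudef, hwdef, hvdef, ← hadef, ← hbdef]
    match_scalars <;> field_simp <;> ring
  have hw2 : ‖w‖ ^ 2 = (a / (a+b))^2 * ‖v‖ ^ 2 := by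
    rw [hwdef, norm_smul, Real.norm_eq_abs, abs_of_nonneg (by positivity), mul_pow]
  have hquad : ‖u + w‖ ^ 2 ≤ (3/2) * ‖u‖ ^ 2 + 3 * ‖w‖ ^ 2 := by
    have h1 := real_inner_le_norm u w
    have h2 : ‖u + w‖ ^ 2 = ‖u‖^2 + 2 * (inner ℝ u w : ℝ) + ‖w‖^2 := norm_add_sq_real u w
    nlinarith [sq_nonneg (‖u‖ - 2 * ‖w‖), norm_nonneg u, norm_nonneg w]
  set K : ℝ := (a + b) * c / (a + b + c) with hKdef
  have hK : 0 ≤ K := by positivity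
  have hL : mergeD (A ∪ B) C = K * ‖u + w‖ ^ 2 := by
    rw [mergeD_eq hABC, hu, Finset.card_union_of_disjoint hAB, hKdef]
    push_cast
    ring
  have key : a * c ≤ b * (a + b + c) := by nlinarith
  have hco1 : K * (3/2) ≤ 3 * (b * c / (b + c)) := by
    rw [hKdef, show (a+b)*c/(a+b+c) * (3/2) = (3*((a+b)*c)/2) / (a+b+c) from by ring,
      show 3 * (b*c/(b+c)) = 3*(b*c)/(b+c) from by ring,
      div_le_div_iff₀ habcpos hbcpos]
    nlinarith [mul_le_mul_of_nonneg_left key hc]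
  have hco2 : K * (3 * (a / (a+b))^2) ≤ 3 * (a * b / (a + b)) := by
    rw [hKdef, show (a+b)*c/(a+b+c) * (3*(a/(a+b))^2)
        = 3*(a^2*c*(a+b)) / ((a+b+c)*(a+b)^2) from by field_simp,
      show 3 * (a*b/(a+b)) = 3*(a*b)/(a+b) from by ring,
      div_le_div_iff₀ (by positivity) habpos]
    nlinarith [mul_le_mul_of_nonneg_left key (mul_nonneg ha (sq_nonneg (a+b)))]
  have hmain : mergeD (A ∪ B) C ≤ 3 * mergeD B C + 3 * mergeD A B := by
    rw [hL, mergeD_eq hBC, mergeD_eq hAB, ← hadef, ← hbdef, ← hcdef, ← hudef, ← hvdef]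
    calc K * ‖u + w‖ ^ 2 ≤ K * ((3/2) * ‖u‖ ^ 2 + 3 * ‖w‖ ^ 2) := by
          exact mul_le_mul_of_nonneg_left hquad hK
      _ = (K * (3/2)) * ‖u‖^2 + (K * (3 * (a/(a+b))^2)) * ‖v‖^2 := by rw [hw2]; ring
      _ ≤ (3 * (b * c / (b + c))) * ‖u‖^2 + (3 * (a * b / (a + b))) * ‖v‖^2 := by
          gcongr <;> positivity
      _ = 3 * (b * c / (b + c) * ‖u‖ ^ 2) + 3 * (a * b / (a + b) * ‖v‖ ^ 2) := by ring
  have hBC' : mergeD B C = Delta (B ∪ C) - Delta B - Delta C := rfl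
  linarith [Delta_nonneg B, Delta_nonneg C]
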